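/- Let K be a field, m a natural number, and R a K-algebra which is a domain, graded by the additive group ℤ^m = (Fin m → ℤ): that is, 𝒜 : (Fin m → ℤ) → Submodule K R is a grading making R a graded algebra (GradedAlgebra 𝒜). Let y ∈ R be a normal element, i.e. the sets {y * x : x ∈ R} and {x * y : x ∈ R} coincide, and for n ∈ ℤ^m let y_n ∈ 𝒜 n denote the degree-n homogeneous component of y. Then every y_n is a normal element of R, and there exists a ring automorphism φ : R ≃+* R which is graded (φ maps 𝒜 k onto 𝒜 k for every k ∈ ℤ^m) such that y_n * x = φ(x) * y_n for all n ∈ ℤ^m and all x ∈ R; in particular y * x = φ(x) * y for all x ∈ R. -/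

import Mathlib

/-- Shortcut instance: without it, instance synthesis for the lexicographic linear order
on `Fin m → ℤ` gets stuck. -/
instance (m : ℕ) : WellFoundedLT (Fin m) := inferInstance

section Aux

variable {K R : Type*} [Field K] [Ring R] [IsDomain R] [Algebra K R] {m : ℕ}
  (𝒜 : (Fin m → ℤ) → Submodule K R) [GradedAlgebra 𝒜]

/-- `d` is the (lexicographically) largest degree occurring in `a`. -/
def IsMaxDeg (a : R) (d : Fin m → ℤ) : Prop :=
  DirectSum.decompose 𝒜 a d ≠ 0 ∧
    ∀ n, DirectSum.decompose 𝒜 a n ≠ 0 → toLex n ≤ toLex d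

/-- `d` is the (lexicographically) smallest degree occurring in `a`. -/
def IsMinDeg (a : R) (d : Fin m → ℤ) : Prop :=
  DirectSum.decompose 𝒜 a d ≠ 0 ∧
    ∀ n, DirectSum.decompose 𝒜 a n ≠ 0 → toLex d ≤ toLex n

lemma support_nonempty_of_ne_zero {a : R} (ha : a ≠ 0)
    [∀ (i : Fin m → ℤ) (x : 𝒜 i), Decidable (x ≠ 0)] :
    (DirectSum.decompose 𝒜 a).support.Nonempty := by
  rw [Finset.nonempty_iff_ne_empty, Ne, DFinsupp.support_eq_empty]
  intro h
  apply ha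
  have := (DirectSum.decompose 𝒜).injective
    (h.trans (DirectSum.decompose_zero (ℳ := 𝒜)).symm)
  simpa using this

lemma exists_isMaxDeg {a : R} (ha : a ≠ 0) : ∃ d, IsMaxDeg 𝒜 a d := by
  classical
  have hne := support_nonempty_of_ne_zero 𝒜 ha
  set t := (DirectSum.decompose 𝒜 a).support.image toLex with ht
  have htne : t.Nonempty := hne.image _
  obtain ⟨d, hd, hdeq⟩ := Finset.mem_image.mp (t.max'_mem htne)
  refine ⟨d, DFinsupp.mem_support_iff.mp hd, fun n hn => ?_⟩
  rw [hdeq]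
  exact Finset.le_max' t _ (Finset.mem_image_of_mem _ (DFinsupp.mem_support_iff.mpr hn))

lemma exists_isMinDeg {a : R} (ha : a ≠ 0) : ∃ d, IsMinDeg 𝒜 a d := by
  classical
  have hne := support_nonempty_of_ne_zero 𝒜 ha
  set t := (DirectSum.decompose 𝒜 a).support.image toLex with ht
  have htne : t.Nonempty := hne.image _
  obtain ⟨d, hd, hdeq⟩ := Finset.mem_image.mp (t.min'_mem htne)
  refine ⟨d, DFinsupp.mem_support_iff.mp hd, fun n hn => ?_⟩
  rw [hdeq]
  exact Finset.min'_le t _ (Finset.mem_image_of_mem _ (DFinsupp.mem_support_iff.mpr hn))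

lemma isMaxDeg_unique {a : R} {d d' : Fin m → ℤ}
    (h : IsMaxDeg 𝒜 a d) (h' : IsMaxDeg 𝒜 a d') : d = d' :=
  toLex.injective (le_antisymm (h'.2 _ h.1) (h.2 _ h'.1))

lemma isMinDeg_unique {a : R} {d d' : Fin m → ℤ}
    (h : IsMinDeg 𝒜 a d) (h' : IsMinDeg 𝒜 a d') : d = d' :=
  toLex.injective (le_antisymm (h.2 _ h'.1) (h'.2 _ h.1))

lemma IsMaxDeg.mul {a b : R} {d e : Fin m → ℤ}
    (ha : IsMaxDeg 𝒜 a d) (hb : IsMaxDeg 𝒜 b e) : IsMaxDeg 𝒜 (a * b) (d + e) := by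
  classical
  have h1 : ((DirectSum.decompose 𝒜 a d : 𝒜 d) : R) ≠ 0 :=
    fun h => ha.1 (Subtype.ext h)
  have h2 : ((DirectSum.decompose 𝒜 b e : 𝒜 e) : R) ≠ 0 :=
    fun h => hb.1 (Subtype.ext h)
  have hfilter :
      (((DirectSum.decompose 𝒜 a).support ×ˢ (DirectSum.decompose 𝒜 b).support).filter
        (fun ij : (Fin m → ℤ) × (Fin m → ℤ) => ij.1 + ij.2 = d + e)) = {(d, e)} := by
    apply Finset.eq_singleton_iff_unique_mem.mpr
    constructor
    · rw [Finset.mem_filter, Finset.mem_product]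
      exact ⟨⟨DFinsupp.mem_support_iff.mpr ha.1, DFinsupp.mem_support_iff.mpr hb.1⟩, rfl⟩
    · rintro ⟨i, j⟩ hij
      simp only [Finset.mem_filter, Finset.mem_product, DFinsupp.mem_support_iff] at hij
      obtain ⟨⟨hi, hj⟩, hsum⟩ := hij
      have hle1 : toLex i ≤ toLex d := ha.2 _ hi
      have hle2 : toLex j ≤ toLex e := hb.2 _ hj
      have heq : toLex i = toLex d ∧ toLex j = toLex e := by
        by_contra hc
        have hlt : toLex i + toLex j < toLex d + toLex e := by
          rcases lt_or_eq_of_le hle1 with h | h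
          · exact add_lt_add_of_lt_of_le h hle2
          · rcases lt_or_eq_of_le hle2 with h' | h'
            · exact add_lt_add_of_le_of_lt hle1 h'
            · exact absurd ⟨h, h'⟩ hc
        rw [← toLex_add, ← toLex_add, hsum] at hlt
        exact lt_irrefl _ hlt
      exact Prod.ext (toLex.injective heq.1) (toLex.injective heq.2)
  constructor
  · intro h0
    have hcoe : ((DirectSum.decompose 𝒜 (a * b)) (d + e) : R) ≠ 0 := by
      rw [DirectSum.decompose_mul, DirectSum.coe_mul_apply, hfilter, Finset.sum_singleton]
      exact mul_ne_zero h1 h2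
    exact hcoe (by rw [h0]; rfl)
  · intro n hn
    have hne : ((DirectSum.decompose 𝒜 (a * b)) n : R) ≠ 0 :=
      fun h => hn (Subtype.ext h)
    rw [DirectSum.decompose_mul, DirectSum.coe_mul_apply] at hne
    obtain ⟨ij, hij, -⟩ := Finset.exists_ne_zero_of_sum_ne_zero hne
    simp only [Finset.mem_filter, Finset.mem_product, DFinsupp.mem_support_iff] at hij
    obtain ⟨⟨hi, hj⟩, hsum⟩ := hij
    calc toLex n = toLex (ij.1 + ij.2) := by rw [hsum]
      _ = toLex ij.1 + toLex ij.2 := toLex_add _ _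
      _ ≤ toLex d + toLex e := add_le_add (ha.2 _ hi) (hb.2 _ hj)
      _ = toLex (d + e) := (toLex_add _ _).symm

lemma IsMinDeg.mul {a b : R} {d e : Fin m → ℤ}
    (ha : IsMinDeg 𝒜 a d) (hb : IsMinDeg 𝒜 b e) : IsMinDeg 𝒜 (a * b) (d + e) := by
  classical
  have h1 : ((DirectSum.decompose 𝒜 a d : 𝒜 d) : R) ≠ 0 :=
    fun h => ha.1 (Subtype.ext h)
  have h2 : ((DirectSum.decompose 𝒜 b e : 𝒜 e) : R) ≠ 0 :=
    fun h => hb.1 (Subtype.ext h)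
  have hfilter :
      (((DirectSum.decompose 𝒜 a).support ×ˢ (DirectSum.decompose 𝒜 b).support).filter
        (fun ij : (Fin m → ℤ) × (Fin m → ℤ) => ij.1 + ij.2 = d + e)) = {(d, e)} := by
    apply Finset.eq_singleton_iff_unique_mem.mpr
    constructor
    · rw [Finset.mem_filter, Finset.mem_product]
      exact ⟨⟨DFinsupp.mem_support_iff.mpr ha.1, DFinsupp.mem_support_iff.mpr hb.1⟩, rfl⟩
    · rintro ⟨i, j⟩ hij
      simp only [Finset.mem_filter, Finset.mem_product, DFinsupp.mem_support_iff] at hij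
      obtain ⟨⟨hi, hj⟩, hsum⟩ := hij
      have hle1 : toLex d ≤ toLex i := ha.2 _ hi
      have hle2 : toLex e ≤ toLex j := hb.2 _ hj
      have heq : toLex d = toLex i ∧ toLex e = toLex j := by
        by_contra hc
        have hlt : toLex d + toLex e < toLex i + toLex j := by
          rcases lt_or_eq_of_le hle1 with h | h
          · exact add_lt_add_of_lt_of_le h hle2
          · rcases lt_or_eq_of_le hle2 with h' | h'
            · exact add_lt_add_of_le_of_lt hle1 h'
            · exact absurd ⟨h, h'⟩ hc
        rw [← toLex_add, ← toLex_add, hsum] at hlt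
        exact lt_irrefl _ hlt
      exact Prod.ext (toLex.injective heq.1.symm) (toLex.injective heq.2.symm)
  constructor
  · intro h0
    have hcoe : ((DirectSum.decompose 𝒜 (a * b)) (d + e) : R) ≠ 0 := by
      rw [DirectSum.decompose_mul, DirectSum.coe_mul_apply, hfilter, Finset.sum_singleton]
      exact mul_ne_zero h1 h2
    exact hcoe (by rw [h0]; rfl)
  · intro n hn
    have hne : ((DirectSum.decompose 𝒜 (a * b)) n : R) ≠ 0 :=
      fun h => hn (Subtype.ext h)
    rw [DirectSum.decompose_mul, DirectSum.coe_mul_apply] at hne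
    obtain ⟨ij, hij, -⟩ := Finset.exists_ne_zero_of_sum_ne_zero hne
    simp only [Finset.mem_filter, Finset.mem_product, DFinsupp.mem_support_iff] at hij
    obtain ⟨⟨hi, hj⟩, hsum⟩ := hij
    calc toLex (d + e) = toLex d + toLex e := toLex_add _ _
      _ ≤ toLex ij.1 + toLex ij.2 := add_le_add (ha.2 _ hi) (hb.2 _ hj)
      _ = toLex (ij.1 + ij.2) := (toLex_add _ _).symm
      _ = toLex n := by rw [hsum]

lemma isDeg_of_mem {u : R} {d : Fin m → ℤ} (hu : u ∈ 𝒜 d) (h0 : u ≠ 0) :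
    IsMaxDeg 𝒜 u d ∧ IsMinDeg 𝒜 u d := by
  have key : ∀ n, DirectSum.decompose 𝒜 u n ≠ 0 → n = d := by
    intro n hn
    by_contra hnd
    exact hn (ZeroMemClass.coe_eq_zero.mp (DirectSum.decompose_of_mem_ne 𝒜 hu (Ne.symm hnd)))
  have hd : DirectSum.decompose 𝒜 u d ≠ 0 := by
    intro h
    apply h0
    have h' := DirectSum.decompose_of_mem_same 𝒜 hu
    rw [h] at h'
    simpa using h'.symm
  exact ⟨⟨hd, fun n hn => (key n hn) ▸ le_rfl⟩, ⟨hd, fun n hn => (key n hn) ▸ le_rfl⟩⟩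

lemma mem_of_isMaxMin {v : R} {d : Fin m → ℤ}
    (hmax : IsMaxDeg 𝒜 v d) (hmin : IsMinDeg 𝒜 v d) : v ∈ 𝒜 d := by
  classical
  rw [← DirectSum.sum_support_decompose 𝒜 v]
  apply Submodule.sum_mem
  intro i hi
  have hi' := DFinsupp.mem_support_iff.mp hi
  have hid : i = d := toLex.injective (le_antisymm (hmax.2 i hi') (hmin.2 i hi'))
  subst hid
  exact (DirectSum.decompose 𝒜 v i).2

/-- If `y u = v y` with `y, u ≠ 0` and `u` homogeneous of degree `d`, then so is `v`. -/
lemma transfer {y u v : R} (hy : y ≠ 0) (hu : u ≠ 0) (huv : y * u = v * y)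
    {d : Fin m → ℤ} (hud : u ∈ 𝒜 d) : v ∈ 𝒜 d := by
  have hyu : y * u ≠ 0 := mul_ne_zero hy hu
  have hv : v ≠ 0 := by rintro rfl; rw [zero_mul] at huv; exact hyu huv
  obtain ⟨p, hp⟩ := exists_isMaxDeg 𝒜 hy
  obtain ⟨q, hq⟩ := exists_isMinDeg 𝒜 hy
  obtain ⟨a, ha⟩ := exists_isMaxDeg 𝒜 hv
  obtain ⟨b, hb⟩ := exists_isMinDeg 𝒜 hv
  obtain ⟨humax, humin⟩ := isDeg_of_mem 𝒜 hud hu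
  have e1 : p + d = a + p := isMaxDeg_unique 𝒜 (huv ▸ hp.mul 𝒜 humax) (ha.mul 𝒜 hp)
  have e2 : q + d = b + q := isMinDeg_unique 𝒜 (huv ▸ hq.mul 𝒜 humin) (hb.mul 𝒜 hq)
  have had : a = d := by
    have : p + d = p + a := by rw [e1, add_comm]
    exact ((add_right_injective p) this).symm
  have hbd : b = d := by
    have : q + d = q + b := by rw [e2, add_comm]
    exact ((add_right_injective q) this).symm
  exact mem_of_isMaxMin 𝒜 (had ▸ ha) (hbd ▸ hb)

/-- If `y u = v y` with `y, u ≠ 0` and `v` homogeneous of degree `d`, then so is `u`. -/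
lemma transfer' {y u v : R} (hy : y ≠ 0) (hu : u ≠ 0) (huv : y * u = v * y)
    {d : Fin m → ℤ} (hvd : v ∈ 𝒜 d) : u ∈ 𝒜 d := by
  have hyu : y * u ≠ 0 := mul_ne_zero hy hu
  have hv : v ≠ 0 := by rintro rfl; rw [zero_mul] at huv; exact hyu huv
  obtain ⟨p, hp⟩ := exists_isMaxDeg 𝒜 hy
  obtain ⟨q, hq⟩ := exists_isMinDeg 𝒜 hy
  obtain ⟨a, ha⟩ := exists_isMaxDeg 𝒜 hu
  obtain ⟨b, hb⟩ := exists_isMinDeg 𝒜 hu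
  obtain ⟨hvmax, hvmin⟩ := isDeg_of_mem 𝒜 hvd hv
  have e1 : p + a = d + p := isMaxDeg_unique 𝒜 (huv ▸ hp.mul 𝒜 ha) (hvmax.mul 𝒜 hp)
  have e2 : q + b = d + q := isMinDeg_unique 𝒜 (huv ▸ hq.mul 𝒜 hb) (hvmin.mul 𝒜 hq)
  have had : a = d := by
    have : p + a = p + d := by rw [e1, add_comm]
    exact (add_right_injective p) this
  have hbd : b = d := by
    have : q + b = q + d := by rw [e2, add_comm]
    exact (add_right_injective q) this
  exact mem_of_isMaxMin 𝒜 (had ▸ ha) (hbd ▸ hb)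

end Aux

/-- In a `ℤ^m`-graded `K`-algebra `R` which is a domain, if `y` is a normal element
(`y R = R y`) with homogeneous components `y_n = (DirectSum.decompose 𝒜 y) n`, then every
`y_n` is normal, and there is a graded ring automorphism `φ` of `R` such that
`y_n * x = φ x * y_n` for all `n` and all `x`; in particular `y * x = φ x * y` for all `x`. -/
theorem normal_element_components_normal_with_graded_automorphism {K R : Type*} [Field K]
    [Ring R] [IsDomain R] [Algebra K R] (m : ℕ) (𝒜 : (Fin m → ℤ) → Submodule K R)
    [GradedAlgebra 𝒜] (y : R)
    (hy : {z : R | ∃ x : R, z = y * x} = {z : R | ∃ x : R, z = x * y}) :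
    (∀ n : Fin m → ℤ,
      {z : R | ∃ x : R, z = (DirectSum.decompose 𝒜 y n : R) * x} =
        {z : R | ∃ x : R, z = x * (DirectSum.decompose 𝒜 y n : R)}) ∧
    ∃ φ : R ≃+* R,
      (∀ k : Fin m → ℤ, φ '' (𝒜 k : Set R) = (𝒜 k : Set R)) ∧
      (∀ (n : Fin m → ℤ) (x : R),
        (DirectSum.decompose 𝒜 y n : R) * x = φ x * (DirectSum.decompose 𝒜 y n : R)) ∧
      (∀ x : R, y * x = φ x * y) := by
  classical
  by_cases hy0 : y = 0
  · subst hy0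
    refine ⟨fun n => ?_, RingEquiv.refl R, fun k => ?_, fun n x => ?_, fun x => ?_⟩
    · ext z; simp [DirectSum.decompose_zero]
    · simp
    · simp [DirectSum.decompose_zero]
    · simp
  · -- uniqueness+existence of the twist
    have hex : ∀ x : R, ∃ w : R, y * x = w * y := by
      intro x
      have hmem : y * x ∈ {z : R | ∃ x : R, z = y * x} := ⟨x, rfl⟩
      rw [hy] at hmem
      exact hmem
    choose f hf using hex
    have funiq : ∀ x w, y * x = w * y → w = f x := fun x w h =>
      mul_right_cancel₀ hy0 (h.symm.trans (hf x))
    have fadd : ∀ a b, f (a + b) = f a + f b := fun a b =>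
      (funiq _ _ (by rw [mul_add, hf a, hf b, add_mul])).symm
    have fmul : ∀ a b, f (a * b) = f a * f b := fun a b =>
      (funiq _ _ (by rw [← mul_assoc, hf a, mul_assoc, hf b, ← mul_assoc])).symm
    have fone : f 1 = 1 := (funiq 1 1 (by rw [mul_one, one_mul])).symm
    have fzero : f 0 = 0 := (funiq 0 0 (by rw [mul_zero, zero_mul])).symm
    have finj : Function.Injective f := fun a b h =>
      mul_left_cancel₀ hy0 (by rw [hf a, hf b, h])
    have fsurj : Function.Surjective f := by
      intro w
      have hmem : w * y ∈ {z : R | ∃ x : R, z = x * y} := ⟨w, rfl⟩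
      rw [← hy] at hmem
      obtain ⟨x, hx⟩ := hmem
      exact ⟨x, (funiq x w hx.symm).symm⟩
    have fsum : ∀ (s : Finset (Fin m → ℤ)) (g : (Fin m → ℤ) → R),
        f (∑ i ∈ s, g i) = ∑ i ∈ s, f (g i) := by
      intro s g
      induction s using Finset.induction_on with
      | empty => simpa using fzero
      | insert _ _ h ih => rw [Finset.sum_insert h, Finset.sum_insert h, fadd, ih]
    have fgrade : ∀ (k : Fin m → ℤ) (x : R), x ∈ 𝒜 k → f x ∈ 𝒜 k := by
      intro k x hx
      by_cases hx0 : x = 0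
      · subst hx0; rw [fzero]; exact zero_mem _
      · exact transfer 𝒜 hy0 hx0 (hf x) hx
    have fgrade' : ∀ (k : Fin m → ℤ) (w : R), w ∈ 𝒜 k → ∃ x ∈ 𝒜 k, f x = w := by
      intro k w hw
      obtain ⟨x, rfl⟩ := fsurj w
      refine ⟨x, ?_, rfl⟩
      by_cases hx0 : x = 0
      · subst hx0; exact zero_mem _
      · exact transfer' 𝒜 hy0 hx0 (hf x) hw
    have hcomp : ∀ (n k : Fin m → ℤ) (x : R), x ∈ 𝒜 k →
        (DirectSum.decompose 𝒜 y n : R) * x = f x * (DirectSum.decompose 𝒜 y n : R) := by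
      intro n k x hx
      have h1 : (DirectSum.decompose 𝒜 (y * x) (n + k) : R)
          = (DirectSum.decompose 𝒜 y n : R) * x :=
        DirectSum.coe_decompose_mul_add_of_right_mem 𝒜 hx
      have h2 : (DirectSum.decompose 𝒜 (f x * y) (k + n) : R)
          = f x * (DirectSum.decompose 𝒜 y n : R) :=
        DirectSum.coe_decompose_mul_add_of_left_mem 𝒜 (fgrade k x hx)
      rw [← h1, hf x, ← h2, add_comm n k]
    have hcompAll : ∀ (n : Fin m → ℤ) (x : R),
        (DirectSum.decompose 𝒜 y n : R) * x = f x * (DirectSum.decompose 𝒜 y n : R) := by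
      intro n x
      conv_lhs => rw [← DirectSum.sum_support_decompose 𝒜 x]
      conv_rhs => rw [← DirectSum.sum_support_decompose 𝒜 x]
      rw [Finset.mul_sum, fsum, Finset.sum_mul]
      exact Finset.sum_congr rfl fun i _ => hcomp n i _ (SetLike.coe_mem _)
    refine ⟨fun n => ?_, RingEquiv.ofBijective
      ({ toFun := f, map_one' := fone, map_mul' := fmul,
         map_zero' := fzero, map_add' := fadd } : R →+* R) ⟨finj, fsurj⟩,
      fun k => ?_, fun n x => hcompAll n x, fun x => hf x⟩
    · ext z
      simp only [Set.mem_setOf_eq]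
      constructor
      · rintro ⟨x, rfl⟩
        exact ⟨f x, hcompAll n x⟩
      · rintro ⟨x, rfl⟩
        obtain ⟨x', rfl⟩ := fsurj x
        exact ⟨x', (hcompAll n x').symm⟩
    · ext w
      simp only [Set.mem_image, SetLike.mem_coe]
      constructor
      · rintro ⟨x, hx, rfl⟩
        exact fgrade k x hx
      · intro hw
        obtain ⟨x, hxk, hxw⟩ := fgrade' k w hw
        exact ⟨x, hxk, hxw⟩
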